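/- arXiv:1108.3640 — 8 statements merged into one kernel-verified Lean document; each statement's English description precedes it below -/
import Mathlib

section
/- For any integer β ≥ 2, the set of (-β)-integers equals the set of rational integers: Z_{-β} = Z. -/
/-- The `(-β)`-transformation `x ↦ -βx - ⌊β/(β+1) - βx⌋`. -/
noncomputable def Tm (β : ℝ) (x : ℝ) : ℝ := -β * x - ⌊β / (β + 1) - β * x⌋

/-- The set of `(-β)`-integers `Z_{-β} = ⋃_{n≥0} (-β)^n T_{-β}^{-n}(0)`. -/
noncomputable def Zm (β : ℝ) : Set ℝ :=
  {x | ∃ n : ℕ, x / (-β) ^ n ∈ Set.Ico (-β / (β + 1)) (1 / (β + 1)) ∧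
    (Tm β)^[n] (x / (-β) ^ n) = 0}

lemma Tm_mem (β : ℝ) (hβ : 0 < β + 1) (x : ℝ) :
    Tm β x ∈ Set.Ico (-β / (β + 1)) (1 / (β + 1)) := by
  have hsum : β / (β + 1) + 1 / (β + 1) = 1 := by field_simp
  have key : Tm β x = Int.fract (β / (β + 1) - β * x) - β / (β + 1) := by
    rw [Tm, Int.fract]; ring
  have h1 := Int.fract_nonneg (β / (β + 1) - β * x)
  have h2 := Int.fract_lt_one (β / (β + 1) - β * x)
  have hneg : -β / (β + 1) = -(β / (β + 1)) := by ring
  constructor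
  · rw [key, hneg]; linarith
  · rw [key]; linarith

lemma iter_eq (b : ℤ) (n : ℕ) (y : ℝ) :
    ∃ m : ℤ, (Tm (b:ℝ))^[n] y = (-(b:ℝ)) ^ n * y + m := by
  induction n with
  | zero => exact ⟨0, by simp⟩
  | succ n ih =>
    obtain ⟨m, hm⟩ := ih
    refine ⟨-b * m - ⌊(b:ℝ) / ((b:ℝ) + 1) - (b:ℝ) * ((Tm (b:ℝ))^[n] y)⌋, ?_⟩
    rw [Function.iterate_succ_apply', Tm, hm]
    push_cast
    ring

theorem stmt_0 (b : ℤ) (hb : 2 ≤ b) : Zm (b : ℝ) = Set.range ((↑·) : ℤ → ℝ) := by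
  have hb1 : (1:ℝ) < (b:ℝ) := by exact_mod_cast hb.trans_lt' (by norm_num)
  have hbpos : (0:ℝ) < (b:ℝ) := by linarith
  have hb1pos : (0:ℝ) < (b:ℝ) + 1 := by linarith
  ext x
  constructor
  · rintro ⟨n, hmem, hiter⟩
    obtain ⟨m, hm⟩ := iter_eq b n (x / (-(b:ℝ)) ^ n)
    have hne : (-(b:ℝ)) ^ n ≠ 0 := by
      apply pow_ne_zero; intro h; rw [neg_eq_zero] at h; linarith [h ▸ hbpos]
    have hx : x = (-(b:ℝ)) ^ n * (x / (-(b:ℝ)) ^ n) := by field_simp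
    refine ⟨-m, ?_⟩
    rw [hiter] at hm
    push_cast
    linarith [hm, hx]
  · rintro ⟨k, rfl⟩
    obtain ⟨n, hn⟩ := pow_unbounded_of_one_lt ((|k| : ℝ) * ((b:ℝ) + 1)) hb1
    have hbn : (0:ℝ) < (b:ℝ) ^ n := by positivity
    have hne : (-(b:ℝ)) ^ n ≠ 0 := by
      apply pow_ne_zero; intro h; rw [neg_eq_zero] at h; linarith [h ▸ hbpos]
    set y : ℝ := (k:ℝ) / (-(b:ℝ)) ^ n with hy
    have habs : |y| < 1 / ((b:ℝ) + 1) := by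
      rw [hy, abs_div, abs_pow, abs_neg, abs_of_pos hbpos,
        div_lt_div_iff₀ hbn hb1pos]
      linarith
    have hylt : y < 1 / ((b:ℝ) + 1) := (abs_lt.mp habs).2
    have hyge : -(b:ℝ) / ((b:ℝ) + 1) ≤ y := by
      have h1 : -(1 / ((b:ℝ) + 1)) < y := (abs_lt.mp habs).1
      have h2 : -(b:ℝ) / ((b:ℝ) + 1) ≤ -(1 / ((b:ℝ) + 1)) := by
        rw [neg_div, neg_le_neg_iff, div_le_div_iff₀ hb1pos hb1pos]
        nlinarith
      linarith
    have hmem : y ∈ Set.Ico (-(b:ℝ) / ((b:ℝ) + 1)) (1 / ((b:ℝ) + 1)) := ⟨hyge, hylt⟩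
    obtain ⟨m, hm⟩ := iter_eq b n y
    have hval : (Tm (b:ℝ))^[n] y = (k:ℝ) + m := by
      rw [hm, hy]; field_simp
    have hitermem : (Tm (b:ℝ))^[n] y ∈ Set.Ico (-(b:ℝ) / ((b:ℝ) + 1)) (1 / ((b:ℝ) + 1)) := by
      cases n with
      | zero => simpa using hmem
      | succ n => rw [Function.iterate_succ_apply']; exact Tm_mem _ hb1pos _
    refine ⟨n, hmem, ?_⟩
    rw [hval]
    have hlb : -1 < (k:ℝ) + m := by
      have := hitermem.1
      rw [hval] at this
      have hgt : -(b:ℝ) / ((b:ℝ) + 1) > -1 := by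
        rw [gt_iff_lt, neg_div, neg_lt_neg_iff, div_lt_one hb1pos]; linarith
      linarith
    have hub : (k:ℝ) + m < 1 := by
      have := hitermem.2
      rw [hval] at this
      have h1 : 1 / ((b:ℝ) + 1) < 1 := by
        rw [div_lt_one hb1pos]; linarith
      linarith
    have hz : k + m = 0 := by
      have h1 : (-1:ℤ) < k + m := by exact_mod_cast (show ((-1:ℤ):ℝ) < ((k + m : ℤ) : ℝ) by push_cast; linarith)
      have h2 : k + m < 1 := by exact_mod_cast (show ((k + m : ℤ) : ℝ) < ((1:ℤ):ℝ) by push_cast; linarith)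
      omega
    have hzr : (k:ℝ) + m = 0 := by exact_mod_cast hz
    linarith
end

section
/- For every β > 1 and every x ∈ ℝ, there exists n ≥ 0 such that (-β)^{-n} x lies in the open interval (-β/(β+1), 1/(β+1)); moreover the value T_{-β}^n((-β)^{-n} x) is independent of the choice of such n, so the map ι_β(x) = T_{-β}^n((-β)^{-n} x) is well defined. -/
lemma step_mem (β : ℝ) (hβ : 1 < β) {y : ℝ}
    (hy : y ∈ Set.Ioo (-β / (β + 1)) (1 / (β + 1))) :
    y / (-β) ∈ Set.Ioo (-β / (β + 1)) (1 / (β + 1)) ∧ Tm β (y / (-β)) = y := by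
  obtain ⟨h1, h2⟩ := hy
  have hβ0 : (0:ℝ) < β := by linarith
  have hb1 : (0:ℝ) < β + 1 := by linarith
  have hβne : β ≠ 0 := ne_of_gt hβ0
  rw [div_lt_iff₀ hb1] at h1
  rw [lt_div_iff₀ hb1] at h2
  have harg1 : 0 < β / (β + 1) + y := by
    rw [← sub_neg_eq_add, lt_sub_iff_add_lt, zero_add, neg_lt, ← neg_div,
      div_lt_iff₀ hb1]
    linarith
  have e : β / (β + 1) * (β + 1) = β := div_mul_cancel₀ _ (ne_of_gt hb1)
  have harg2 : β / (β + 1) + y < 1 := by nlinarith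
  have hrep : y / -β = -y / β := by rw [div_neg, neg_div]
  constructor
  · rw [hrep]
    constructor
    · rw [div_lt_div_iff₀ hb1 hβ0]
      nlinarith
    · rw [div_lt_div_iff₀ hβ0 hb1]
      nlinarith
  · have hmul : -β * (y / -β) = y := by field_simp
    have h3 : β * (y / -β) = -y := by rw [hrep]; field_simp
    rw [Tm, hmul, h3, sub_neg_eq_add,
      Int.floor_eq_zero_iff.2 ⟨le_of_lt harg1, harg2⟩]
    simp

lemma iter_eq_s3 (β : ℝ) (hβ : 1 < β) (x : ℝ) (n : ℕ)
    (h : x / (-β) ^ n ∈ Set.Ioo (-β / (β + 1)) (1 / (β + 1))) (k : ℕ) :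
    x / (-β) ^ (n + k) ∈ Set.Ioo (-β / (β + 1)) (1 / (β + 1)) ∧
      (Tm β)^[k] (x / (-β) ^ (n + k)) = x / (-β) ^ n := by
  induction k with
  | zero => simpa using h
  | succ k ih =>
    obtain ⟨hmem, heq⟩ := ih
    have hrw : x / (-β) ^ (n + (k + 1)) = (x / (-β) ^ (n + k)) / (-β) := by
      rw [← Nat.add_assoc, pow_succ, ← div_div]
    obtain ⟨hmem', heq'⟩ := step_mem β hβ hmem
    rw [hrw]
    refine ⟨hmem', ?_⟩
    rw [Function.iterate_succ_apply, heq', heq]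

theorem stmt_3 (β : ℝ) (hβ : 1 < β) (x : ℝ) :
    (∃ n : ℕ, x / (-β) ^ n ∈ Set.Ioo (-β / (β + 1)) (1 / (β + 1))) ∧
    ∀ n m : ℕ, x / (-β) ^ n ∈ Set.Ioo (-β / (β + 1)) (1 / (β + 1)) →
      x / (-β) ^ m ∈ Set.Ioo (-β / (β + 1)) (1 / (β + 1)) →
      (Tm β)^[n] (x / (-β) ^ n) = (Tm β)^[m] (x / (-β) ^ m) := by
  have hβ0 : (0:ℝ) < β := by linarith
  have hb1 : (0:ℝ) < β + 1 := by linarith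
  constructor
  · obtain ⟨n, hn⟩ := pow_unbounded_of_one_lt (|x| * (β + 1)) hβ
    have habs : |x / (-β) ^ n| < 1 / (β + 1) := by
      rw [abs_div, abs_pow, abs_neg, abs_of_pos hβ0,
        div_lt_div_iff₀ (pow_pos hβ0 n) hb1]
      linarith
    refine ⟨n, ?_, lt_of_abs_lt habs⟩
    have h1 := neg_lt_of_abs_lt habs
    have h2 : -β / (β + 1) < -(1 / (β + 1)) := by
      rw [← neg_div, div_lt_div_iff₀ hb1 hb1]
      nlinarith
    linarith
  · intro n m hn hm
    rcases le_total n m with h | h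
    · obtain ⟨k, rfl⟩ := Nat.exists_eq_add_of_le h
      rw [← (iter_eq_s3 β hβ x n hn k).2, ← Function.iterate_add_apply]
    · obtain ⟨k, rfl⟩ := Nat.exists_eq_add_of_le h
      rw [← (iter_eq_s3 β hβ x m hm k).2, ← Function.iterate_add_apply]
end

section
/- For any β > 1, the set of (-β)-integers equals the preimage of 0 under ι_β: Z_{-β} = ι_β^{-1}(0). -/
theorem stmt_4 (β : ℝ) (hβ : 1 < β) :
    Zm β = {x : ℝ | ∃ n : ℕ, x / (-β) ^ n ∈ Set.Ioo (-β / (β + 1)) (1 / (β + 1)) ∧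
      (Tm β)^[n] (x / (-β) ^ n) = 0} := by
  have hβ0 : (0:ℝ) < β := by linarith
  have hβ1 : (0:ℝ) < β + 1 := by linarith
  have hβne : β ≠ 0 := ne_of_gt hβ0
  have hβ1ne : β + 1 ≠ 0 := ne_of_gt hβ1
  have hT0 : Tm β 0 = 0 := by
    have hfl : ⌊β / (β + 1)⌋ = 0 := by
      rw [Int.floor_eq_zero_iff]
      constructor
      · positivity
      · rw [div_lt_one hβ1]; linarith
    simp [Tm, hfl]
  ext x
  simp only [Zm, Set.mem_setOf_eq]
  constructor
  · rintro ⟨n, ⟨h1, h2⟩, hit⟩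
    rcases eq_or_lt_of_le h1 with heq | hlt
    · -- endpoint case : x / (-β)^n = -β/(β+1)
      have hpow : ((-β) ^ n : ℝ) ≠ 0 := pow_ne_zero _ (by simpa using hβne)
      have hz : x / (-β) ^ (n + 2) = -1 / (β * (β + 1)) := by
        have hx : x = -β / (β + 1) * (-β) ^ n := by
          field_simp at heq ⊢
          linarith [heq]
        rw [hx]
        have : ((-β) : ℝ) ^ (n + 2) = (-β) ^ n * (β * β) := by ring
        rw [this]
        field_simp
      have hTz : Tm β (-1 / (β * (β + 1))) = -β / (β + 1) := by
        have harg : β / (β + 1) - β * (-1 / (β * (β + 1))) = 1 := by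
          field_simp
          ring
        rw [Tm, harg]
        have : ⌊(1:ℝ)⌋ = 1 := Int.floor_one
        rw [this]
        push_cast
        field_simp
        ring
      refine ⟨n + 2, ⟨?_, ?_⟩, ?_⟩
      · rw [hz, div_lt_div_iff₀ hβ1 (by positivity)]
        nlinarith [mul_lt_mul_of_pos_right (show (1:ℝ) < β * β by nlinarith) hβ1]
      · rw [hz]
        have hlt0 : -1 / (β * (β + 1)) < 0 := by
          apply div_neg_of_neg_of_pos <;> [linarith; positivity]
        have : (0:ℝ) < 1 / (β + 1) := by positivity
        linarith
      · rw [hz, Function.iterate_succ_apply, hTz, Function.iterate_succ_apply', heq, hit, hT0]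
    · exact ⟨n, ⟨hlt, h2⟩, hit⟩
  · rintro ⟨n, hmem, hit⟩
    exact ⟨n, ⟨le_of_lt hmem.1, hmem.2⟩, hit⟩
end

section
/- Let a_1 a_2 ⋯ be a sequence of non-negative integers with a_1 ≥ 2, satisfying a_{n+1} a_{n+2} ⋯ ≤_alt a_1 a_2 ⋯ for all n ≥ 1, and additionally a_{n+1} a_{n+2} ⋯ <'_alt a_1 a_2 ⋯ for all n ≥ 2 with a_n = 0 (where x <'_alt y means there is m ≥ 0 with x_1⋯x_m = y_1⋯y_m and (-1)^m (x_{m+1} - y_{m+1}) < -1). Let β be the unique real in [a_1, a_1+1] with Σ_{k=1}^∞ a_k/(-β)^k = -β/(β+1) and -β/(β+1) ≤ Σ_{k=1}^∞ a_{n+k}/(-β)^k ≤ 1/(β+1) for all n. Then the strict inequality Σ_{k=1}^∞ a_{n+k}/(-β)^k < 1/(β+1) holds for all n ≥ 1, i.e., a_1 a_2 ⋯ is the (-β)-expansion of -β/(β+1). -/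
/-- Alternate order (strict), on sequences indexed from 1:
`x <_alt y` iff `x_1 ⋯ x_m = y_1 ⋯ y_m` and `(-1)^m (x_{m+1} - y_{m+1}) < 0` for some `m ≥ 0`. -/
def AltLt (x y : ℕ → ℕ) : Prop :=
  ∃ m : ℕ, (∀ i, 1 ≤ i → i ≤ m → x i = y i) ∧ (-1 : ℤ) ^ m * ((x (m + 1) : ℤ) - y (m + 1)) < 0

/-- Alternate order (non-strict). -/
def AltLe (x y : ℕ → ℕ) : Prop := AltLt x y ∨ ∀ i, 1 ≤ i → x i = y i

/-- The relation `<'_alt`: `x_1 ⋯ x_m = y_1 ⋯ y_m` and `(-1)^m (x_{m+1} - y_{m+1}) < -1`. -/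
def AltLt' (x y : ℕ → ℕ) : Prop :=
  ∃ m : ℕ, (∀ i, 1 ≤ i → i ≤ m → x i = y i) ∧ (-1 : ℤ) ^ m * ((x (m + 1) : ℤ) - y (m + 1)) < -1

theorem stmt_11 (a : ℕ → ℕ) (ha1 : 2 ≤ a 1)
    (halt : ∀ n, 1 ≤ n → AltLe (fun k => a (n + k)) a)
    (halt' : ∀ n, 2 ≤ n → a n = 0 → AltLt' (fun k => a (n + k)) a)
    (β : ℝ) (hβl : (a 1 : ℝ) ≤ β) (hβr : β ≤ (a 1 : ℝ) + 1)
    (hsum : HasSum (fun k : ℕ => (a (k + 1) : ℝ) / (-β) ^ (k + 1)) (-β / (β + 1)))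
    (hsums : ∀ n, 1 ≤ n → ∃ s : ℝ,
      HasSum (fun k : ℕ => (a (n + k + 1) : ℝ) / (-β) ^ (k + 1)) s ∧
      -β / (β + 1) ≤ s ∧ s ≤ 1 / (β + 1)) :
    ∀ n, 1 ≤ n → ∀ s : ℝ,
      HasSum (fun k : ℕ => (a (n + k + 1) : ℝ) / (-β) ^ (k + 1)) s →
      s < 1 / (β + 1) := by
  classical
  have hβ2 : (2:ℝ) ≤ β := le_trans (by exact_mod_cast ha1) hβl
  have hβ1 : (0:ℝ) < β + 1 := by linarith
  have hβne : (-β) ≠ 0 := by intro h; nlinarith [h]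
  have hex : ∀ n : ℕ, ∃ s : ℝ,
      HasSum (fun k : ℕ => (a (n + k + 1) : ℝ) / (-β) ^ (k + 1)) s ∧
      -β / (β + 1) ≤ s ∧ s ≤ 1 / (β + 1) := by
    intro n
    rcases n with _ | n
    · refine ⟨-β / (β + 1), by simpa using hsum, le_refl _, ?_⟩
      rw [div_le_div_iff₀ hβ1 hβ1]; nlinarith
    · exact hsums (n+1) (by omega)
  set t : ℕ → ℝ := fun n => (hex n).choose with htdef
  have ht : ∀ n, HasSum (fun k : ℕ => (a (n + k + 1) : ℝ) / (-β) ^ (k + 1)) (t n) :=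
    fun n => (hex n).choose_spec.1
  have hlb : ∀ n, -β / (β + 1) ≤ t n := fun n => (hex n).choose_spec.2.1
  have hub : ∀ n, t n ≤ 1 / (β + 1) := fun n => (hex n).choose_spec.2.2
  have ht0 : t 0 = -β / (β + 1) := by
    have h0 : HasSum (fun k : ℕ => (a (k + 1) : ℝ) / (-β) ^ (k + 1)) (t 0) := by
      simpa using ht 0
    exact h0.unique hsum
  have hrec : ∀ n : ℕ, t (n+1) = -β * t n - a (n+1) := by
    intro n
    have h2 := (ht (n+1)).mul_right ((-β)⁻¹)
    have h3 : HasSum (fun k : ℕ => (a (n + (k+1) + 1) : ℝ) / (-β) ^ ((k+1) + 1))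
        (t (n+1) * (-β)⁻¹) := by
      have hfun : (fun k : ℕ => (a (n + (k+1) + 1) : ℝ) / (-β) ^ ((k+1) + 1))
          = fun k : ℕ => (a (n + 1 + k + 1) : ℝ) / (-β) ^ (k + 1) * (-β)⁻¹ := by
        funext k
        rw [show n + (k+1) + 1 = n + 1 + k + 1 from by omega, pow_succ]
        field_simp
      rw [hfun]; exact h2
    have h4 := (hasSum_nat_add_iff (f := fun k : ℕ => (a (n + k + 1) : ℝ) / (-β) ^ (k + 1)) 1).mp h3
    have h5 : t n = t (n+1) * (-β)⁻¹ + (a (n + 1) : ℝ) / (-β) ^ 1 := by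
      have := (ht n).unique h4
      simpa using this
    field_simp at h5
    linarith [h5]
  intro n hn s hs
  by_contra hcon
  push_neg at hcon
  have hseq : s = t n := hs.unique (ht n)
  have htn : t n = 1/(β+1) := le_antisymm (hub n) (hseq ▸ hcon)
  have h1 : t (n+1) = -β/(β+1) - a (n+1) := by
    rw [hrec, htn]; ring
  have ha0' : (a (n+1) : ℝ) = 0 := by
    have hb := hlb (n+1)
    rw [h1] at hb
    have h2 : (a (n+1) : ℝ) ≤ 0 := by linarith
    exact le_antisymm h2 (Nat.cast_nonneg _)
  have ha0 : a (n+1) = 0 := by exact_mod_cast ha0'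
  have ht1 : t (n+1) = -β/(β+1) := by rw [h1, ha0']; ring
  obtain ⟨m, hm, hd⟩ := halt' (n+1) (by omega) ha0
  have heq : ∀ j, j ≤ m → t (n+1+j) = t j := by
    intro j
    induction j with
    | zero => intro _; rw [Nat.add_zero, ht1, ht0]
    | succ j ih =>
      intro hj
      have hij := ih (by omega)
      have ha : a (n+1+j+1) = a (j+1) := hm (j+1) (by omega) hj
      have : t (n+1+(j+1)) = t ((n+1+j)+1) := by congr 1
      rw [this, hrec (n+1+j), hrec j, hij, ha]
  have hkey : t (n+1+m+1) - t (m+1) = (a (m+1) : ℝ) - (a (n+1+(m+1)) : ℝ) := by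
    rw [hrec (n+1+m), hrec m, heq m le_rfl]
    ring
  set d : ℤ := (a (n+1+(m+1)) : ℤ) - (a (m+1) : ℤ) with hddef
  have hdub : (d : ℝ) ≤ 1 := by
    have h1 := hub (m+1)
    have h2 := hlb (n+1+m+1)
    have hR : (d:ℝ) = t (m+1) - t (n+1+m+1) := by
      push_cast [hddef]; linarith [hkey]
    rw [hR]
    have : 1/(β+1) - (-β/(β+1)) = 1 := by field_simp; ring
    linarith
  have hdlb : (-1 : ℝ) ≤ (d : ℝ) := by
    have h1 := hlb (m+1)
    have h2 := hub (n+1+m+1)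
    have hR : (d:ℝ) = t (m+1) - t (n+1+m+1) := by
      push_cast [hddef]; linarith [hkey]
    rw [hR]
    have : -β/(β+1) - 1/(β+1) = -1 := by field_simp; ring
    linarith
  have hdub' : d ≤ 1 := by exact_mod_cast hdub
  have hdlb' : (-1 : ℤ) ≤ d := by exact_mod_cast hdlb
  have hd' : (-1 : ℤ) ^ m * d < -1 := hd
  rcases Nat.even_or_odd m with he | ho
  · rw [he.neg_one_pow] at hd'; omega
  · rw [ho.neg_one_pow] at hd'; omega
end

section
/- The sequence a_1 a_2 ⋯ = 2 (10)^ω (i.e., a_1 = 2, a_{2k} = 1, a_{2k+1} = 0 for k ≥ 1) satisfies a_{n+1} a_{n+2} ⋯ ≤_alt a_1 a_2 ⋯ for all n ≥ 1 and Σ_{k=1}^∞ a_k/(-2)^k = -2/3, yet Σ_{k=1}^∞ a_{k+2}/(-2)^k = 1/3 = 1/(2+1), so a_1 a_2 ⋯ is not the (-2)-expansion of -2/3; the (-2)-expansion of -2/3 is 2^ω. -/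
lemma geom14 : HasSum (fun j : ℕ => ((1:ℝ)/4)^(j+1)) (1/3) := by
  have h := (hasSum_geometric_of_lt_one (r := (1:ℝ)/4) (by norm_num) (by norm_num)).mul_left (1/4)
  have : (1:ℝ)/4 * (1 - 1/4)⁻¹ = 1/3 := by norm_num
  rw [this] at h
  convert h using 2 with j
  · rfl
  rw [pow_succ]; ring

theorem stmt_12 (a : ℕ → ℕ) (ha1 : a 1 = 2)
    (haeven : ∀ k, 1 ≤ k → a (2 * k) = 1) (haodd : ∀ k, 1 ≤ k → a (2 * k + 1) = 0) :
    (∀ n, 1 ≤ n → AltLe (fun k => a (n + k)) a) ∧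
    HasSum (fun k : ℕ => (a (k + 1) : ℝ) / (-2 : ℝ) ^ (k + 1)) (-2 / 3) ∧
    HasSum (fun k : ℕ => (a (k + 3) : ℝ) / (-2 : ℝ) ^ (k + 1)) (1 / 3) ∧
    (1 : ℝ) / 3 = 1 / (2 + 1) ∧
    (∀ n : ℕ, ⌊(2 : ℝ) / (2 + 1) - 2 * (Tm 2)^[n] (-2 / (2 + 1))⌋ = 2) := by
  have hle : ∀ m, 2 ≤ m → a m ≤ 1 := by
    intro m hm
    rcases Nat.even_or_odd m with ⟨c, hc⟩ | ⟨c, hc⟩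
    · have h1 : a (2 * c) = 1 := haeven c (by omega)
      rw [show m = 2 * c by omega]
      omega
    · have h1 : a (2 * c + 1) = 0 := haodd c (by omega)
      rw [show m = 2 * c + 1 by omega]
      omega
  refine ⟨?_, ?_, ?_, by norm_num, ?_⟩
  · intro n hn
    left
    refine ⟨0, fun i hi hi' => by omega, ?_⟩
    have := hle (n + 1) (by omega)
    simp only [pow_zero, one_mul, ha1]
    push_cast
    omega
  · -- main sum
    have hinj : Function.Injective (fun j : ℕ => 2 * j) := fun x y h => by simp only [] at h; omega
    have h1 : HasSum (fun k : ℕ => (a (k + 2) : ℝ) / (-2 : ℝ) ^ (k + 2)) (1/3) := by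
      rw [← Function.Injective.hasSum_iff hinj ?_]
      · convert geom14 using 2 with j
        have h2 : a (2 * j + 2) = 1 := by
          have := haeven (j + 1) (by omega)
          convert this using 2 <;> try ring
        simp only [Function.comp_apply, h2]
        push_cast
        rw [show (2*j+2) = 2*(j+1) by ring, pow_mul]
        norm_num
        rw [one_div, inv_pow]
      · intro x hx
        have hodd : ∃ c, x = 2 * c + 1 := by
          rcases Nat.even_or_odd x with ⟨c, hc⟩ | ⟨c, hc⟩
          · exact absurd ⟨c, show 2*c = x by omega⟩ hx
          · exact ⟨c, by omega⟩
        obtain ⟨c, rfl⟩ := hodd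
        have h0 : a (2 * (c + 1) + 1) = 0 := haodd (c + 1) (by omega)
        rw [show 2*c+1+2 = 2*(c+1)+1 by ring, h0]
        norm_num
    have := (hasSum_nat_add_iff (f := fun k : ℕ => (a (k + 1) : ℝ) / (-2 : ℝ) ^ (k + 1)) 1).mp
      (by convert h1 using 2 with k <;> try ring_nf)
    convert this using 1
    · rfl
    simp [ha1]
    norm_num
  · have hinj : Function.Injective (fun j : ℕ => 2 * j + 1) := fun x y h => by simp only [] at h; omega
    rw [← Function.Injective.hasSum_iff hinj ?_]
    · convert geom14 using 2 with j
      have h2 : a (2 * j + 1 + 3) = 1 := by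
        have := haeven (j + 2) (by omega)
        convert this using 2 <;> try ring
      simp only [Function.comp_apply, h2]
      push_cast
      rw [show (2*j+1+1) = 2*(j+1) by ring, pow_mul]
      norm_num
      rw [one_div, inv_pow]
    · intro x hx
      have heven : ∃ c, x = 2 * c := by
        rcases Nat.even_or_odd x with ⟨c, hc⟩ | ⟨c, hc⟩
        · exact ⟨c, by omega⟩
        · exact absurd ⟨c, show 2*c+1 = x by omega⟩ hx
      obtain ⟨c, rfl⟩ := heven
      have h0 : a (2 * (c + 1) + 1) = 0 := haodd (c + 1) (by omega)
      rw [show 2*c+3 = 2*(c+1)+1 by ring, h0]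
      norm_num
  · have hfix : ∀ n : ℕ, (Tm 2)^[n] (-2 / (2 + 1)) = -2/3 := by
      intro n
      induction n with
      | zero => norm_num
      | succ n ih =>
        rw [Function.iterate_succ_apply', ih]
        unfold Tm
        norm_num
    intro n
    rw [hfix n]
    rw [show (2:ℝ)/(2+1) - 2 * (-2/3) = 2 by ring]
    rw [show ((2:ℝ)) = ((2:ℤ):ℝ) by norm_num, Int.floor_intCast]
end

section
/- If β ≥ (1+√5)/2, then with a_1 = ⌊β/(β+1) + β²/(β+1)⌋ = ⌊-t_0 - β t_0⌋ and t_1 = T_{-β}(-β/(β+1)), one has: a_1 = 1 and t_1 ≥ 0, or a_1 ≥ 2. -/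
theorem stmt_13 (β : ℝ) (hβ : (1 + Real.sqrt 5) / 2 ≤ β) :
    (⌊β / (β + 1) + β ^ 2 / (β + 1)⌋ = 1 ∧ 0 ≤ Tm β (-β / (β + 1))) ∨
    2 ≤ ⌊β / (β + 1) + β ^ 2 / (β + 1)⌋ := by
  have h5 : (2:ℝ) ≤ Real.sqrt 5 := by
    nlinarith [Real.sq_sqrt (by norm_num : (5:ℝ) ≥ 0), Real.sqrt_nonneg 5]
  have hb : (3:ℝ)/2 ≤ β := by linarith
  have hne : β + 1 ≠ 0 := by positivity
  have key : β / (β + 1) + β ^ 2 / (β + 1) = β := by field_simp; ring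
  have hs : Real.sqrt 5 ^ 2 = 5 := Real.sq_sqrt (by norm_num)
  have hsq : β + 1 ≤ β ^ 2 := by nlinarith [sq_nonneg (2*β - 1 - Real.sqrt 5)]
  rw [key]
  by_cases h2 : 2 ≤ β
  · right
    exact Int.le_floor.mpr (by exact_mod_cast h2)
  · left
    push_neg at h2
    have hfl : ⌊β⌋ = 1 := by
      rw [Int.floor_eq_iff]
      constructor <;> push_cast <;> linarith
    refine ⟨hfl, ?_⟩
    unfold Tm
    have harg : β / (β + 1) - β * (-β / (β + 1)) = β := by field_simp; ring
    rw [harg, hfl]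
    have : -β * (-β / (β + 1)) = β ^ 2 / (β + 1) := by field_simp
    rw [this]
    have h1 : (1:ℝ) ≤ β ^ 2 / (β + 1) := by
      rw [le_div_iff₀ (by positivity)]; linarith
    push_cast
    linarith
end

section
/- Let a_1 a_2 ⋯ = 3 0 1 0³ 1 0⁵ 1 ⋯, i.e., a_1 = 3 and for each k ≥ 1 the block following position k(k-1)+1 is 0^{2k-1} 1 (so a_{k(k-1)+2} ⋯ a_{k(k+1)+1} = 0^{2k-1} 1). Then this sequence satisfies a_{n+1} a_{n+2} ⋯ ≤_alt a_1 a_2 ⋯ for all n ≥ 1, and a_{n+1} a_{n+2} ⋯ <'_alt a_1 a_2 ⋯ for all n ≥ 2 with a_n = 0. -/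
lemma exists_block (m : ℕ) (hm : 2 ≤ m) :
    ∃ k, 1 ≤ k ∧ k * (k - 1) + 2 ≤ m ∧ m ≤ k * (k + 1) + 1 := by
  induction m, hm using Nat.le_induction with
  | base => exact ⟨1, by norm_num⟩
  | succ m hm ih =>
    obtain ⟨k, hk1, hlo, hhi⟩ := ih
    rcases eq_or_lt_of_le hhi with h | h
    · refine ⟨k + 1, by omega, ?_, ?_⟩
      · have : (k + 1) * (k + 1 - 1) = k * (k + 1) := by
          rw [Nat.add_sub_cancel]; ring
        omega
      · nlinarith
    · exact ⟨k, hk1, by omega, by omega⟩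

lemma a_le_one (a : ℕ → ℕ)
    (hblock0 : ∀ k, 1 ≤ k → ∀ j, 1 ≤ j → j ≤ 2 * k - 1 → a (k * (k - 1) + 1 + j) = 0)
    (hblock1 : ∀ k, 1 ≤ k → a (k * (k + 1) + 1) = 1)
    (m : ℕ) (hm : 2 ≤ m) : a m ≤ 1 := by
  obtain ⟨k, hk1, hlo, hhi⟩ := exists_block m hm
  rcases eq_or_lt_of_le hhi with h | h
  · rw [h]; rw [hblock1 k hk1]
  · -- m ≤ k*(k+1), write m = k*(k-1)+1+j
    have hkk : k * (k + 1) = k * (k - 1) + 2 * k := by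
      cases k with
      | zero => omega
      | succ n => rw [Nat.add_sub_cancel]; ring
    set j := m - (k * (k - 1) + 1) with hj
    have h1 : 1 ≤ j := by omega
    have h2 : j ≤ 2 * k - 1 := by omega
    have : a (k * (k - 1) + 1 + j) = 0 := hblock0 k hk1 j h1 h2
    have hmj : k * (k - 1) + 1 + j = m := by omega
    rw [hmj] at this
    omega

theorem stmt_17 (a : ℕ → ℕ) (ha1 : a 1 = 3)
    (hblock0 : ∀ k, 1 ≤ k → ∀ j, 1 ≤ j → j ≤ 2 * k - 1 → a (k * (k - 1) + 1 + j) = 0)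
    (hblock1 : ∀ k, 1 ≤ k → a (k * (k + 1) + 1) = 1) :
    (∀ n, 1 ≤ n → AltLe (fun k => a (n + k)) a) ∧
    (∀ n, 2 ≤ n → a n = 0 → AltLt' (fun k => a (n + k)) a) := by
  constructor
  · intro n hn
    left
    refine ⟨0, by omega, ?_⟩
    have h := a_le_one a hblock0 hblock1 (n + 1) (by omega)
    simp only [pow_zero, one_mul, ha1]
    have : (a (n + 1) : ℤ) ≤ 1 := by exact_mod_cast h
    show (a (n + 1) : ℤ) - 3 < 0
    omega
  · intro n hn _
    refine ⟨0, by omega, ?_⟩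
    have h := a_le_one a hblock0 hblock1 (n + 1) (by omega)
    simp only [pow_zero, one_mul, ha1]
    have : (a (n + 1) : ℤ) ≤ 1 := by exact_mod_cast h
    show (a (n + 1) : ℤ) - 3 < -1
    omega
end

section
/- Let β > 1 with t_n = T_{-β}^n(-β/(β+1)) and (-β)-expansion digits a_n of -β/(β+1). If for some n, k ≥ 1 the digit string satisfies a_{n+1} ⋯ a_{n+2k} = 0^{2k-1} 1, then 0 < t_n < β^{-2k} · β²/(β+1) and -β^{-2k} · β³/(β+1) < t_{n+1} < 0. -/
theorem stmt_18 (β : ℝ) (hβ : 1 < β) (t : ℕ → ℝ) (a : ℕ → ℕ)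
    (ht : ∀ n, t n = (Tm β)^[n] (-β / (β + 1)))
    (hexp : ∀ n, HasSum (fun k : ℕ => (a (n + k + 1) : ℝ) / (-β) ^ (k + 1)) (t n))
    (hdom : ∀ n, t n ∈ Set.Ico (-β / (β + 1)) (1 / (β + 1)))
    (n k : ℕ) (hk : 1 ≤ k)
    (h0 : ∀ j, 1 ≤ j → j ≤ 2 * k - 1 → a (n + j) = 0) (h1 : a (n + 2 * k) = 1) :
    (0 < t n ∧ t n < β ^ 2 / ((β + 1) * β ^ (2 * k))) ∧
    (-(β ^ 3 / ((β + 1) * β ^ (2 * k))) < t (n + 1) ∧ t (n + 1) < 0) := by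
  have hβ0 : (0:ℝ) < β := lt_trans one_pos hβ
  have hβ1 : (0:ℝ) < β + 1 := by linarith
  have hbne : (-β) ≠ 0 := by simpa using hβ0.ne'
  -- key recurrence
  have step : ∀ m, t (m + 1) = -β * t m - a (m + 1) := by
    intro m
    have h1s := hexp m
    have h2 := (hexp (m + 1)).div_const (-β)
    have hfe : (fun i : ℕ => (a (m + 1 + i + 1) : ℝ) / (-β) ^ (i + 1) / (-β))
        = fun i : ℕ => (fun j : ℕ => (a (m + j + 1) : ℝ) / (-β) ^ (j + 1)) (i + 1) := by
      funext i
      have hidx : m + 1 + i + 1 = m + (i + 1) + 1 := by omega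
      simp only [hidx, div_div, ← pow_succ]
    rw [hfe] at h2
    rw [hasSum_nat_add_iff (f := fun j : ℕ => (a (m + j + 1) : ℝ) / (-β) ^ (j + 1)) 1] at h2
    have h3 := h1s.unique h2
    simp only [Finset.range_one, Finset.sum_singleton, Nat.add_zero, pow_one] at h3
    field_simp at h3
    have h4 : β * (t (m + 1) - (-β * t m - a (m + 1))) = 0 := by linear_combination -h3
    rcases mul_eq_zero.mp h4 with h | h
    · linarith
    · linarith
  obtain ⟨k', rfl⟩ : ∃ k', k = k' + 1 := ⟨k - 1, by omega⟩
  -- t (n + j) = (-β)^j * t n for j ≤ 2k'+1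
  have key : ∀ j, j ≤ 2 * k' + 1 → t (n + j) = (-β) ^ j * t n := by
    intro j hj
    induction j with
    | zero => simp
    | succ i ih =>
      have hi : i ≤ 2 * k' + 1 := by omega
      have h0i : a (n + (i + 1)) = 0 := h0 (i + 1) (by omega) (by omega)
      have hs := step (n + i)
      rw [show n + i + 1 = n + (i + 1) by ring, h0i] at hs
      rw [hs, ih hi]
      push_cast
      ring
  have hB : (0:ℝ) < β ^ (2 * k') := pow_pos hβ0 _
  have e1 : t (n + 2 * k') = β ^ (2 * k') * t n := by
    rw [key (2 * k') (by omega), Even.neg_pow ⟨k', by ring⟩]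
  have e2 : t (n + 2 * (k' + 1)) = β ^ (2 * k') * β ^ 2 * t n - 1 := by
    have hs := step (n + (2 * k' + 1))
    have hidx : n + (2 * k' + 1) + 1 = n + 2 * (k' + 1) := by omega
    rw [hidx] at hs
    rw [hs, h1, key _ le_rfl, Odd.neg_pow ⟨k', by ring⟩, pow_succ]
    push_cast
    ring
  have hlo := (div_le_iff₀ hβ1).mp ((hdom (n + 2 * (k' + 1))).1)
  have hhi := (lt_div_iff₀ hβ1).mp ((hdom (n + 2 * k')).2)
  rw [e2] at hlo
  rw [e1] at hhi
  have hpk : β ^ (2 * (k' + 1)) = β ^ (2 * k') * β ^ 2 := by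
    rw [show 2*(k'+1) = 2*k'+2 by omega, pow_add]
  have htn_pos : 0 < t n := by
    nlinarith [mul_pos (mul_pos hB (by positivity : (0:ℝ) < β ^ 2)) hβ1]
  have ht1 : t (n + 1) = -β * t n := by
    have hs := step n
    rw [h0 1 le_rfl (by omega)] at hs
    simpa using hs
  refine ⟨⟨htn_pos, ?_⟩, ?_, ?_⟩
  · rw [lt_div_iff₀ (by positivity), hpk]
    nlinarith [mul_lt_mul_of_pos_right hhi (by positivity : (0:ℝ) < β ^ 2)]
  · rw [ht1, show -(β ^ 3 / ((β + 1) * β ^ (2 * (k' + 1))))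
      = (-(β ^ 3)) / ((β + 1) * β ^ (2 * (k' + 1))) by ring,
      div_lt_iff₀ (by positivity), hpk]
    nlinarith [mul_lt_mul_of_pos_right hhi (by positivity : (0:ℝ) < β ^ 3)]
  · rw [ht1]
    nlinarith [mul_pos hβ0 htn_pos]
end
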